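/- Let A ∈ ℝ^{r×n} and B ∈ ℝ^{m×r} be such that AAᵀ and BᵀB are positive definite, let G ∈ ℝ^{m×n}, set H := AAᵀ + BᵀB, and let X ∈ ℝ^{r×r} be the unique solution of the Sylvester equation H·X + X·H = (BᵀB)⁻¹BᵀGAᵀ + AGᵀB(BᵀB)⁻¹. Define J* := −(BᵀB)⁻¹BᵀG + X·A and K* := −(I_m − B(BᵀB)⁻¹Bᵀ)·G·Aᵀ(AAᵀ)⁻¹ − B·X. Then (J*, K*) satisfies the balance constraint J*Aᵀ + A(J*)ᵀ = (K*)ᵀB + BᵀK*, and for every pair (J, K) ∈ ℝ^{r×n} × ℝ^{m×r} satisfying JAᵀ + AJᵀ = KᵀB + BᵀK, one has ‖K*A + BJ* + G‖_F ≤ ‖KA + BJ + G‖_F; that is, (J*, K*) is a global minimizer of ‖KA + BJ + G‖_F² subject to the balance constraint. -/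

import Mathlib

open Matrix


lemma trace_eq_sumsq {m n : ℕ} (S N : Matrix (Fin m) (Fin n) ℝ) :
    Matrix.trace (Sᵀ * N) = ∑ i, ∑ j, S i j * N i j := by
  simp [Matrix.trace, Matrix.diag, Matrix.mul_apply, Matrix.transpose_apply]
  rw [Finset.sum_comm]

lemma pythag {m n : ℕ} (S N : Matrix (Fin m) (Fin n) ℝ) :
    ∑ i, ∑ j, ((S + N) i j) ^ 2
      = (∑ i, ∑ j, (S i j) ^ 2) + (∑ i, ∑ j, (N i j) ^ 2)
        + 2 * Matrix.trace (Sᵀ * N) := by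
  rw [trace_eq_sumsq]
  simp only [Matrix.add_apply]
  rw [← Finset.sum_add_distrib, Finset.mul_sum, ← Finset.sum_add_distrib]
  refine Finset.sum_congr rfl fun i _ => ?_
  rw [← Finset.sum_add_distrib, Finset.mul_sum, ← Finset.sum_add_distrib]
  refine Finset.sum_congr rfl fun j _ => by ring

lemma proj_contract {m n : ℕ} (P : Matrix (Fin m) (Fin m) ℝ) (Q : Matrix (Fin n) (Fin n) ℝ)
    (hPt : Pᵀ = P) (hPi : P * P = P) (hQt : Qᵀ = Q) (hQi : Q * Q = Q)
    (M : Matrix (Fin m) (Fin n) ℝ) :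
    ∑ i, ∑ j, ((P * M * Q) i j) ^ 2 ≤ ∑ i, ∑ j, (M i j) ^ 2 := by
  set S := P * M * Q with hS
  have horth : Matrix.trace (Sᵀ * (M - S)) = 0 := by
    have h1 : Sᵀ * M = Q * (Mᵀ * (P * M)) := by
      rw [hS, Matrix.transpose_mul, Matrix.transpose_mul, hPt, hQt,
        Matrix.mul_assoc, Matrix.mul_assoc]
    have h2 : Sᵀ * S = (Q * (Mᵀ * (P * M))) * Q := by
      rw [hS, Matrix.transpose_mul, Matrix.transpose_mul, hPt, hQt]
      calc Q * (Mᵀ * P) * (P * M * Q) = Q * (Mᵀ * ((P * P) * (M * Q))) := by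
            simp only [Matrix.mul_assoc]
        _ = (Q * (Mᵀ * (P * M))) * Q := by rw [hPi]; simp only [Matrix.mul_assoc]
    have h3 : Matrix.trace ((Q * (Mᵀ * (P * M))) * Q) = Matrix.trace (Q * (Mᵀ * (P * M))) := by
      rw [Matrix.trace_mul_comm, ← Matrix.mul_assoc, hQi]
    rw [Matrix.mul_sub, Matrix.trace_sub, h1, h2, h3, sub_self]
  have hM : S + (M - S) = M := by abel
  calc ∑ i, ∑ j, (S i j) ^ 2
      ≤ (∑ i, ∑ j, (S i j) ^ 2) + (∑ i, ∑ j, ((M - S) i j) ^ 2) := by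
        have : 0 ≤ ∑ i, ∑ j, ((M - S) i j) ^ 2 :=
          Finset.sum_nonneg fun i _ => Finset.sum_nonneg fun j _ => sq_nonneg _
        linarith
    _ = ∑ i, ∑ j, (M i j) ^ 2 := by
        have hp := pythag S (M - S)
        rw [horth, mul_zero, add_zero, hM] at hp
        exact hp.symm

lemma skew_zero {r : ℕ} (H D : Matrix (Fin r) (Fin r) ℝ) (hH : H.PosDef)
    (hDt : Dᵀ = -D) (h : H * D + D * H = 0) : D = 0 := by
  have t0 : Matrix.trace (Dᵀ * (H * D)) + Matrix.trace (Dᵀ * (D * H)) = 0 := by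
    rw [← Matrix.trace_add, ← Matrix.mul_add, h, Matrix.mul_zero, Matrix.trace_zero]
  have t1 : Matrix.trace (Dᵀ * (D * H)) = Matrix.trace (Dᵀ * (H * D)) := by
    have e1 : Dᵀ * (D * H) = -(D * (D * H)) := by rw [hDt, Matrix.neg_mul]
    have e2 : Dᵀ * (H * D) = -(D * (H * D)) := by rw [hDt, Matrix.neg_mul]
    rw [e1, e2, Matrix.trace_neg, Matrix.trace_neg, neg_inj]
    rw [Matrix.trace_mul_comm D (D * H), Matrix.mul_assoc]
  have t2 : Matrix.trace (Dᵀ * (H * D)) = 0 := by linarith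
  have tsum : Matrix.trace (Dᵀ * (H * D))
      = ∑ j, (fun i => D i j) ⬝ᵥ (H *ᵥ fun i => D i j) := by
    simp [Matrix.trace, Matrix.diag, Matrix.mul_apply, Matrix.mulVec, dotProduct,
      Matrix.transpose_apply]
  have hnn : ∀ j ∈ Finset.univ, (0:ℝ) ≤ (fun i => D i j) ⬝ᵥ (H *ᵥ fun i => D i j) := by
    intro j _
    have := hH.posSemidef.dotProduct_mulVec_nonneg (fun i => D i j)
    simpa using this
  have hzero : ∀ j ∈ (Finset.univ : Finset (Fin r)),
      (fun i => D i j) ⬝ᵥ (H *ᵥ fun i => D i j) = 0 := by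
    rw [← Finset.sum_eq_zero_iff_of_nonneg hnn, ← tsum]
    exact t2
  ext i j
  by_contra hij
  have hcol : (fun i => D i j) ≠ 0 := by
    intro hc
    exact hij (by simpa using congrFun hc i)
  have := hH.dotProduct_mulVec_pos hcol
  simp only [Matrix.zero_apply] at hij
  have h0 := hzero j (Finset.mem_univ j)
  rw [show (star fun i => D i j) = (fun i => D i j) from by simp] at this
  simp [h0] at this


/-- Frobenius norm of a real matrix. -/
noncomputable def frobNorm {m n : ℕ} (A : Matrix (Fin m) (Fin n) ℝ) : ℝ :=
  Real.sqrt (∑ i, ∑ j, (A i j) ^ 2)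

/-- The pair `(J*, K*)` built from the solution `X` of the Sylvester equation
satisfies the balance constraint and globally minimizes
`‖K A + B J + G‖_F` among balanced pairs `(J, K)`. -/
theorem odelora_constrained_minimizer {m n r : ℕ}
    (A : Matrix (Fin r) (Fin n) ℝ) (B : Matrix (Fin m) (Fin r) ℝ)
    (hA : (A * Aᵀ).PosDef) (hB : (Bᵀ * B).PosDef)
    (G : Matrix (Fin m) (Fin n) ℝ)
    (X : Matrix (Fin r) (Fin r) ℝ)
    (hX : (A * Aᵀ + Bᵀ * B) * X + X * (A * Aᵀ + Bᵀ * B)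
        = (Bᵀ * B)⁻¹ * Bᵀ * G * Aᵀ + A * Gᵀ * B * (Bᵀ * B)⁻¹) :
    let Js : Matrix (Fin r) (Fin n) ℝ := -((Bᵀ * B)⁻¹ * Bᵀ * G) + X * A
    let Ks : Matrix (Fin m) (Fin r) ℝ :=
      -(((1 : Matrix (Fin m) (Fin m) ℝ) - B * (Bᵀ * B)⁻¹ * Bᵀ) * G * Aᵀ * (A * Aᵀ)⁻¹) - B * X
    (Js * Aᵀ + A * Jsᵀ = Ksᵀ * B + Bᵀ * Ks) ∧
      ∀ (J : Matrix (Fin r) (Fin n) ℝ) (K : Matrix (Fin m) (Fin r) ℝ),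
        J * Aᵀ + A * Jᵀ = Kᵀ * B + Bᵀ * K →
        frobNorm (Ks * A + B * Js + G) ≤ frobNorm (K * A + B * J + G) := by
  intro Js Ks
  have hAdet : IsUnit (A * Aᵀ).det := isUnit_iff_ne_zero.mpr hA.det_pos.ne'
  have hBdet : IsUnit (Bᵀ * B).det := isUnit_iff_ne_zero.mpr hB.det_pos.ne'
  have hBB : (Bᵀ * B)⁻¹ * (Bᵀ * B) = 1 := Matrix.nonsing_inv_mul _ hBdet
  have hBB' : (Bᵀ * B) * (Bᵀ * B)⁻¹ = 1 := Matrix.mul_nonsing_inv _ hBdet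
  have hAA : (A * Aᵀ)⁻¹ * (A * Aᵀ) = 1 := Matrix.nonsing_inv_mul _ hAdet
  have hAA' : (A * Aᵀ) * (A * Aᵀ)⁻¹ = 1 := Matrix.mul_nonsing_inv _ hAdet
  have hBiT : ((Bᵀ * B)⁻¹)ᵀ = (Bᵀ * B)⁻¹ := by
    rw [Matrix.transpose_nonsing_inv, Matrix.transpose_mul, Matrix.transpose_transpose]
  have hAiT : ((A * Aᵀ)⁻¹)ᵀ = (A * Aᵀ)⁻¹ := by
    rw [Matrix.transpose_nonsing_inv, Matrix.transpose_mul, Matrix.transpose_transpose]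
  -- cancellation lemmas
  have cB1 : ∀ {k : ℕ} (M : Matrix (Fin r) (Fin k) ℝ),
      Bᵀ * (B * ((Bᵀ * B)⁻¹ * M)) = M := by
    intro k M
    rw [← Matrix.mul_assoc, ← Matrix.mul_assoc, Matrix.mul_assoc (Bᵀ * B), ← Matrix.mul_assoc,
      hBB', Matrix.one_mul]
  have cB2 : ∀ {k : ℕ} (M : Matrix (Fin r) (Fin k) ℝ),
      (Bᵀ * B)⁻¹ * (Bᵀ * (B * M)) = M := by
    intro k M
    rw [← Matrix.mul_assoc, ← Matrix.mul_assoc, Matrix.mul_assoc _ (Bᵀ) B, hBB, Matrix.one_mul]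
  have cA1 : ∀ {k : ℕ} (M : Matrix (Fin r) (Fin k) ℝ),
      A * (Aᵀ * ((A * Aᵀ)⁻¹ * M)) = M := by
    intro k M
    rw [← Matrix.mul_assoc, ← Matrix.mul_assoc, Matrix.mul_assoc (A * Aᵀ), ← Matrix.mul_assoc,
      hAA', Matrix.one_mul]
  have cA2 : ∀ {k : ℕ} (M : Matrix (Fin r) (Fin k) ℝ),
      (A * Aᵀ)⁻¹ * (A * (Aᵀ * M)) = M := by
    intro k M
    rw [← Matrix.mul_assoc, ← Matrix.mul_assoc, Matrix.mul_assoc _ A Aᵀ, hAA, Matrix.one_mul]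
  -- X is symmetric
  have hHpd : (A * Aᵀ + Bᵀ * B).PosDef := hA.add hB
  have hXT : (A * Aᵀ + Bᵀ * B) * Xᵀ + Xᵀ * (A * Aᵀ + Bᵀ * B)
      = (Bᵀ * B)⁻¹ * Bᵀ * G * Aᵀ + A * Gᵀ * B * (Bᵀ * B)⁻¹ := by
    have h := congrArg Matrix.transpose hX
    simp only [Matrix.transpose_add, Matrix.transpose_mul, Matrix.transpose_transpose,
      hBiT] at h
    simp only [Matrix.add_mul, Matrix.mul_add, Matrix.mul_assoc] at h ⊢
    abel_nf at h ⊢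
    exact h
  have hskew : X - Xᵀ = 0 := by
    refine skew_zero (A * Aᵀ + Bᵀ * B) (X - Xᵀ) hHpd ?_ ?_
    · rw [Matrix.transpose_sub, Matrix.transpose_transpose, neg_sub]
    · have e := sub_eq_zero.mpr (hX.trans hXT.symm)
      calc (A * Aᵀ + Bᵀ * B) * (X - Xᵀ) + (X - Xᵀ) * (A * Aᵀ + Bᵀ * B)
          = ((A * Aᵀ + Bᵀ * B) * X + X * (A * Aᵀ + Bᵀ * B))
            - ((A * Aᵀ + Bᵀ * B) * Xᵀ + Xᵀ * (A * Aᵀ + Bᵀ * B)) := by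
            rw [Matrix.mul_sub, Matrix.sub_mul]; abel
        _ = 0 := e
  have hXsym : Xᵀ = X := (sub_eq_zero.mp hskew).symm
  constructor
  · -- balance constraint
    have hX' := hX
    simp only [Matrix.add_mul, Matrix.mul_add, Matrix.mul_assoc] at hX'
    show (-((Bᵀ * B)⁻¹ * Bᵀ * G) + X * A) * Aᵀ
        + A * (-((Bᵀ * B)⁻¹ * Bᵀ * G) + X * A)ᵀ
        = (-(((1 : Matrix (Fin m) (Fin m) ℝ) - B * (Bᵀ * B)⁻¹ * Bᵀ) * G * Aᵀ * (A * Aᵀ)⁻¹) - B * X)ᵀ * B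
        + Bᵀ * (-(((1 : Matrix (Fin m) (Fin m) ℝ) - B * (Bᵀ * B)⁻¹ * Bᵀ) * G * Aᵀ * (A * Aᵀ)⁻¹) - B * X)
    simp only [Matrix.transpose_add, Matrix.transpose_sub, Matrix.transpose_neg,
      Matrix.transpose_mul, Matrix.transpose_transpose, Matrix.transpose_one, hBiT, hAiT, hXsym,
      Matrix.add_mul, Matrix.mul_add, Matrix.sub_mul, Matrix.mul_sub, Matrix.neg_mul,
      Matrix.mul_neg, Matrix.one_mul, Matrix.mul_one, Matrix.mul_assoc, cB1, cB2, cA1, cA2, hBB, hBB', hAA, hAA']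
    rw [← sub_eq_zero, ← sub_eq_zero.mpr hX']
    abel
  · -- optimality
    intro J K _
    set P : Matrix (Fin m) (Fin m) ℝ := 1 - B * (Bᵀ * B)⁻¹ * Bᵀ with hPdef
    set Q : Matrix (Fin n) (Fin n) ℝ := 1 - Aᵀ * (A * Aᵀ)⁻¹ * A with hQdef
    have hPt : Pᵀ = P := by
      rw [hPdef]
      simp only [Matrix.transpose_sub, Matrix.transpose_one, Matrix.transpose_mul,
        Matrix.transpose_transpose, hBiT, Matrix.mul_assoc]
    have hQt : Qᵀ = Q := by
      rw [hQdef]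
      simp only [Matrix.transpose_sub, Matrix.transpose_one, Matrix.transpose_mul,
        Matrix.transpose_transpose, hAiT, Matrix.mul_assoc]
    have hPi : P * P = P := by
      rw [hPdef]
      simp only [Matrix.sub_mul, Matrix.mul_sub, Matrix.one_mul, Matrix.mul_one,
        Matrix.mul_assoc, cB1, cB2]
      abel
    have hQi : Q * Q = Q := by
      rw [hQdef]
      simp only [Matrix.sub_mul, Matrix.mul_sub, Matrix.one_mul, Matrix.mul_one,
        Matrix.mul_assoc, cA1, cA2]
      abel
    have hAQ : A * Q = 0 := by
      rw [hQdef]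
      simp only [Matrix.mul_sub, Matrix.mul_one, Matrix.mul_assoc, cA1]
      simp
    have hPB : ∀ {k : ℕ} (M : Matrix (Fin r) (Fin k) ℝ), P * (B * M) = 0 := by
      intro k M
      rw [hPdef]
      simp only [Matrix.sub_mul, Matrix.one_mul, Matrix.mul_assoc, cB2]
      simp
    have hres : P * (K * A + B * J + G) * Q = P * G * Q := by
      simp only [Matrix.mul_add, Matrix.add_mul, Matrix.mul_assoc, hPB, hAQ,
        Matrix.mul_zero, Matrix.zero_mul]
      simp
    have hcand : Ks * A + B * Js + G = P * G * Q := by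
      show (-(((1 : Matrix (Fin m) (Fin m) ℝ) - B * (Bᵀ * B)⁻¹ * Bᵀ) * G * Aᵀ * (A * Aᵀ)⁻¹) - B * X) * A
          + B * (-((Bᵀ * B)⁻¹ * Bᵀ * G) + X * A) + G = P * G * Q
      rw [hPdef, hQdef]
      simp only [Matrix.sub_mul, Matrix.mul_sub, Matrix.add_mul, Matrix.mul_add,
        Matrix.neg_mul, Matrix.mul_neg, Matrix.one_mul, Matrix.mul_one, Matrix.mul_assoc]
      abel
    have hle := proj_contract P Q hPt hPi hQt hQi (K * A + B * J + G)
    rw [hres] at hle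
    unfold frobNorm
    apply Real.sqrt_le_sqrt
    rw [hcand]
    exact hle
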